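/- Let q₀ ∈ ℝ and q_v ∈ ℝ³ satisfy q₀² + ‖q_v‖² = 1 and q₀ ≠ 0, and let F : ℝ³ → ℝ³ be the linear map F v = (1/2)(q₀·v + q_v × v). Let ρ₁, ρ₂, ρ₃ > 0, let ψ : ℝ³ → ℝ³ be the diagonal map (ψ v)_i = v_i/ρ_i, let γ > 0, k_m > 0, M_ω > 0, and let ε ∈ ℝ³. Define α = −(|q₀|/2)·k_m·M_ω·F^{−1}(ψ^{−1}(w)) where w = (tanh(γε₁), tanh(γε₂), tanh(γε₃)). Then ‖α‖ ≤ √3·k_m·M_ω·max(ρ₁, ρ₂, ρ₃). -/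

import Mathlib

/-- The three-dimensional cross product on `EuclideanSpace ℝ (Fin 3)`. -/
noncomputable def cross3 (a b : EuclideanSpace ℝ (Fin 3)) : EuclideanSpace ℝ (Fin 3) :=
  (WithLp.equiv 2 (Fin 3 → ℝ)).symm
    (crossProduct ((WithLp.equiv 2 (Fin 3 → ℝ)) a) ((WithLp.equiv 2 (Fin 3 → ℝ)) b))

lemma inner_cross3_self (a v : EuclideanSpace ℝ (Fin 3)) :
    (inner ℝ v (cross3 a v) : ℝ) = 0 := by
  simp only [cross3, PiLp.inner_apply, RCLike.inner_apply, conj_trivial,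
    WithLp.equiv_symm_apply, WithLp.equiv_apply, PiLp.toLp_apply, crossProduct,
    LinearMap.mk₂_apply, Fin.sum_univ_three, Matrix.cons_val_zero, Matrix.cons_val_one,
    Matrix.head_cons, Matrix.cons_val_two, Matrix.tail_cons]
  ring

lemma abs_tanh_le_one (x : ℝ) : |Real.tanh x| ≤ 1 := by
  have hc := Real.cosh_pos x
  have hs : Real.cosh x ^ 2 = Real.sinh x ^ 2 + 1 := Real.cosh_sq x
  rw [Real.tanh_eq_sinh_div_cosh, abs_div, abs_of_pos hc, div_le_one hc]
  nlinarith [abs_nonneg (Real.sinh x), sq_abs (Real.sinh x)]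

lemma Fsymm_bound (q₀ : ℝ) (qv : EuclideanSpace ℝ (Fin 3)) (hq₀ : q₀ ≠ 0)
    (F : EuclideanSpace ℝ (Fin 3) ≃L[ℝ] EuclideanSpace ℝ (Fin 3))
    (hF : ∀ v, F v = (1 / 2 : ℝ) • (q₀ • v + cross3 qv v))
    (x : EuclideanSpace ℝ (Fin 3)) : ‖F.symm x‖ ≤ (2 / |q₀|) * ‖x‖ := by
  have key : ∀ v : EuclideanSpace ℝ (Fin 3), (|q₀| / 2) * ‖v‖ ≤ ‖F v‖ := by
    intro v
    rw [hF v]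
    rw [norm_smul]
    have h1 : ‖q₀ • v + cross3 qv v‖ ^ 2 = q₀ ^ 2 * ‖v‖ ^ 2 + ‖cross3 qv v‖ ^ 2 := by
      rw [norm_add_sq_real, real_inner_smul_left, inner_cross3_self, norm_smul,
        Real.norm_eq_abs, mul_pow, sq_abs]
      ring
    have h2 : (|q₀| * ‖v‖) ^ 2 ≤ ‖q₀ • v + cross3 qv v‖ ^ 2 := by
      rw [h1, mul_pow, sq_abs]
      nlinarith [sq_nonneg ‖cross3 qv v‖]
    have h3 : |q₀| * ‖v‖ ≤ ‖q₀ • v + cross3 qv v‖ := by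
      nlinarith [h2, mul_nonneg (abs_nonneg q₀) (norm_nonneg v),
        norm_nonneg (q₀ • v + cross3 qv v)]
    calc |q₀| / 2 * ‖v‖ = 1/2 * (|q₀| * ‖v‖) := by ring
    _ ≤ 1/2 * ‖q₀ • v + cross3 qv v‖ := by linarith
    _ = ‖(1/2 : ℝ)‖ * ‖q₀ • v + cross3 qv v‖ := by norm_num
  have := key (F.symm x)
  rw [F.apply_symm_apply] at this
  have habs : 0 < |q₀| := abs_pos.mpr hq₀
  rw [div_mul_eq_mul_div, le_div_iff₀ habs]
  calc ‖F.symm x‖ * |q₀| = 2 * (|q₀|/2 * ‖F.symm x‖) := by ring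
  _ ≤ 2 * ‖x‖ := by linarith

theorem virtual_control_law_norm_bound (q₀ : ℝ) (qv : EuclideanSpace ℝ (Fin 3))
    (hunit : q₀ ^ 2 + ‖qv‖ ^ 2 = 1) (hq₀ : q₀ ≠ 0)
    (F : EuclideanSpace ℝ (Fin 3) ≃L[ℝ] EuclideanSpace ℝ (Fin 3))
    (hF : ∀ v, F v = (1 / 2 : ℝ) • (q₀ • v + cross3 qv v))
    (ρ : Fin 3 → ℝ) (hρ : ∀ i, 0 < ρ i)
    (γ km Mω : ℝ) (hγ : 0 < γ) (hkm : 0 < km) (hMω : 0 < Mω)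
    (ε : EuclideanSpace ℝ (Fin 3))
    (α : EuclideanSpace ℝ (Fin 3))
    (hα : α = (-(|q₀| / 2 * km * Mω)) •
        F.symm ((WithLp.equiv 2 (Fin 3 → ℝ)).symm
          (fun i => ρ i * Real.tanh (γ * ε i)))) :
    ‖α‖ ≤ Real.sqrt 3 * km * Mω * max (ρ 0) (max (ρ 1) (ρ 2)) := by
  set w : EuclideanSpace ℝ (Fin 3) :=
    (WithLp.equiv 2 (Fin 3 → ℝ)).symm (fun i => ρ i * Real.tanh (γ * ε i)) with hw
  set R := max (ρ 0) (max (ρ 1) (ρ 2)) with hR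
  have hRpos : 0 < R := lt_max_iff.mpr (Or.inl (hρ 0))
  have hwb : ‖w‖ ≤ Real.sqrt 3 * R := by
    have hterm : ∀ i : Fin 3, (ρ i * Real.tanh (γ * ε i)) ^ 2 ≤ R ^ 2 := by
      intro i
      have h1 : |ρ i * Real.tanh (γ * ε i)| ≤ R := by
        rw [abs_mul, abs_of_pos (hρ i)]
        have ht : |Real.tanh (γ * ε i)| ≤ 1 := abs_tanh_le_one _
        have hρR : ρ i ≤ R := by
          fin_cases i <;> simp [hR, le_max_iff, le_refl, le_max_left, le_max_right]
        nlinarith [abs_nonneg (Real.tanh (γ * ε i)), (hρ i).le]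
      calc (ρ i * Real.tanh (γ * ε i)) ^ 2 = |ρ i * Real.tanh (γ * ε i)| ^ 2 := (sq_abs _).symm
      _ ≤ R ^ 2 := by nlinarith [abs_nonneg (ρ i * Real.tanh (γ * ε i))]
    have hn : ‖w‖ = Real.sqrt (∑ i : Fin 3, (ρ i * Real.tanh (γ * ε i)) ^ 2) := by
      rw [EuclideanSpace.norm_eq]
      congr 1
      apply Finset.sum_congr rfl
      intro i _
      simp only [Real.norm_eq_abs, sq_abs]
      rfl
    rw [hn]
    have : (∑ i : Fin 3, (ρ i * Real.tanh (γ * ε i)) ^ 2) ≤ 3 * R ^ 2 := by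
      rw [Fin.sum_univ_three]
      linarith [hterm 0, hterm 1, hterm 2]
    calc Real.sqrt (∑ i : Fin 3, (ρ i * Real.tanh (γ * ε i)) ^ 2)
        ≤ Real.sqrt (3 * R ^ 2) := Real.sqrt_le_sqrt this
    _ = Real.sqrt 3 * R := by
        rw [Real.sqrt_mul (by norm_num), Real.sqrt_sq hRpos.le]
  have hFs := Fsymm_bound q₀ qv hq₀ F hF w
  have habs : 0 < |q₀| := abs_pos.mpr hq₀
  rw [hα, norm_smul]
  have hcoef : ‖-(|q₀| / 2 * km * Mω)‖ = |q₀| / 2 * km * Mω := by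
    rw [norm_neg, Real.norm_eq_abs, abs_of_pos]
    positivity
  rw [hcoef]
  calc |q₀| / 2 * km * Mω * ‖F.symm w‖
      ≤ |q₀| / 2 * km * Mω * ((2 / |q₀|) * ‖w‖) := by
        apply mul_le_mul_of_nonneg_left hFs
        positivity
  _ = km * Mω * ‖w‖ := by field_simp
  _ ≤ km * Mω * (Real.sqrt 3 * R) := by
        apply mul_le_mul_of_nonneg_left hwb
        positivity
  _ = Real.sqrt 3 * km * Mω * R := by ring
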